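/- The group ℬ₂(ℤ/2) is trivial: in the abelian group generated by symbols (b₁,b₂) with b₁,b₂ ∈ ℤ/2 and ⟨b₁,b₂⟩ = ℤ/2, modulo the reordering relation (b₁,b₂) = (b₂,b₁) and the blow-up relation [(b₁,b₂) = (0,b₂) if b₁ = b₂, and (b₁,b₂) = (b₁−b₂,b₂) + (b₁,b₂−b₁) if b₁ ≠ b₂], every generator is equal to zero. -/

import Mathlib

/-- Generators of the symbols group `𝒮₂(H)`: pairs `(b₁, b₂)` of elements of
`H^∨` (identified with `H`) generating `H^∨`. -/
abbrev Gen2 (H : Type*) [AddCommGroup H] : Type _ :=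
  {p : H × H // AddSubgroup.closure {p.1, p.2} = ⊤}

open FreeAbelianGroup in
/-- The reordering relation (O) and the blow-up relations (B) defining `ℬ₂(H)`. -/
def Rel2 (H : Type*) [AddCommGroup H] : Set (FreeAbelianGroup (Gen2 H)) :=
  {x | (∃ g g' : Gen2 H, g.1.1 = g'.1.2 ∧ g.1.2 = g'.1.1 ∧ x = of g - of g') ∨
       (∃ g g' : Gen2 H, g.1.1 = g.1.2 ∧ g'.1.1 = 0 ∧ g'.1.2 = g.1.2 ∧
          x = of g - of g') ∨
       (∃ g g₁ g₂ : Gen2 H, g.1.1 ≠ g.1.2 ∧ g₁.1 = (g.1.1 - g.1.2, g.1.2) ∧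
          g₂.1 = (g.1.1, g.1.2 - g.1.1) ∧ x = of g - of g₁ - of g₂)}

/-- The group `ℬ₂(H)`: the free abelian group on generating pairs modulo the
reordering and blow-up relations. -/
abbrev B2 (H : Type*) [AddCommGroup H] : Type _ :=
  FreeAbelianGroup (Gen2 H) ⧸ AddSubgroup.closure (Rel2 H)

private lemma gen_top_of_one {s : AddSubgroup (ZMod 2)} (h : (1 : ZMod 2) ∈ s) : s = ⊤ := by
  ext x
  simp only [AddSubgroup.mem_top, iff_true]
  fin_cases x
  · exact s.zero_mem
  · exact h

private def g01 : Gen2 (ZMod 2) :=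
  ⟨((0 : ZMod 2), (1 : ZMod 2)), gen_top_of_one (AddSubgroup.subset_closure (by simp))⟩

private def g10 : Gen2 (ZMod 2) :=
  ⟨((1 : ZMod 2), (0 : ZMod 2)), gen_top_of_one (AddSubgroup.subset_closure (by simp))⟩

private def g11 : Gen2 (ZMod 2) :=
  ⟨((1 : ZMod 2), (1 : ZMod 2)), gen_top_of_one (AddSubgroup.subset_closure (by simp))⟩

open FreeAbelianGroup in
private lemma mem11 : of g11 ∈ AddSubgroup.closure (Rel2 (ZMod 2)) := by
  have hr : (-of g11 : FreeAbelianGroup (Gen2 (ZMod 2))) ∈ Rel2 (ZMod 2) := by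
    refine Or.inr (Or.inr ⟨g01, g11, g01, ?_, ?_, ?_, ?_⟩)
    · decide
    · show ((1 : ZMod 2), (1 : ZMod 2)) = ((0 : ZMod 2) - 1, 1); decide
    · show ((0 : ZMod 2), (1 : ZMod 2)) = ((0 : ZMod 2), 1 - 0); decide
    · abel
  have := AddSubgroup.subset_closure hr
  simpa using neg_mem this

open FreeAbelianGroup in
private lemma mem01 : of g01 ∈ AddSubgroup.closure (Rel2 (ZMod 2)) := by
  have hr : (of g11 - of g01 : FreeAbelianGroup (Gen2 (ZMod 2))) ∈ Rel2 (ZMod 2) := by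
    refine Or.inr (Or.inl ⟨g11, g01, rfl, rfl, rfl, rfl⟩)
  have h1 := AddSubgroup.subset_closure hr
  have : of g01 = of g11 - (of g11 - of g01) := by abel
  rw [this]
  exact sub_mem mem11 h1

open FreeAbelianGroup in
private lemma mem10 : of g10 ∈ AddSubgroup.closure (Rel2 (ZMod 2)) := by
  have hr : (of g10 - of g01 : FreeAbelianGroup (Gen2 (ZMod 2))) ∈ Rel2 (ZMod 2) := by
    exact Or.inl ⟨g10, g01, rfl, rfl, rfl⟩
  have h1 := AddSubgroup.subset_closure hr
  have : of g10 = (of g10 - of g01) + of g01 := by abel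
  rw [this]
  exact add_mem h1 mem01

open FreeAbelianGroup in
private lemma mem_all (g : Gen2 (ZMod 2)) :
    of g ∈ AddSubgroup.closure (Rel2 (ZMod 2)) := by
  obtain ⟨⟨a, b⟩, h⟩ := g
  have hcases : ∀ x : ZMod 2, x = 0 ∨ x = 1 := by decide
  rcases hcases a with rfl | rfl <;> rcases hcases b with rfl | rfl
  · exfalso
    have h1 : (1 : ZMod 2) ∈ AddSubgroup.closure ({0, 0} : Set (ZMod 2)) := by
      rw [show ({0, 0} : Set (ZMod 2)) = {((0:ZMod 2),(0:ZMod 2)).1, ((0:ZMod 2),(0:ZMod 2)).2} from rfl, h]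
      trivial
    simp only [Set.pair_eq_singleton, AddSubgroup.closure_singleton_zero,
      AddSubgroup.mem_bot] at h1
    exact one_ne_zero h1
  · exact mem01
  · exact mem10
  · exact mem11

/-- `ℬ₂(ℤ/2)` is trivial: every generator is equal to zero in the quotient. -/
theorem B2_zmod2_trivial :
    Subsingleton (B2 (ZMod 2)) ∧
      ∀ g : Gen2 (ZMod 2),
        (QuotientAddGroup.mk (FreeAbelianGroup.of g) : B2 (ZMod 2)) = 0 := by
  have hgen : ∀ g : Gen2 (ZMod 2),
      (QuotientAddGroup.mk (FreeAbelianGroup.of g) : B2 (ZMod 2)) = 0 := by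
    intro g
    rw [QuotientAddGroup.eq_zero_iff]
    exact mem_all g
  refine ⟨⟨fun x y => ?_⟩, hgen⟩
  have hzero : ∀ x : B2 (ZMod 2), x = 0 := by
    intro x
    induction x using QuotientAddGroup.induction_on with
    | H a =>
      induction a using FreeAbelianGroup.induction_on with
      | zero => rfl
      | of g => exact hgen g
      | neg g hg =>
        have : (QuotientAddGroup.mk (-FreeAbelianGroup.of g) : B2 (ZMod 2)) =
            -(QuotientAddGroup.mk (FreeAbelianGroup.of g)) := rfl
        rw [this, hgen g, neg_zero]
      | add a b ha hb =>
        have : (QuotientAddGroup.mk (a + b) : B2 (ZMod 2)) =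
            QuotientAddGroup.mk a + QuotientAddGroup.mk b := rfl
        rw [this, ha, hb, add_zero]
  rw [hzero x, hzero y]
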